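/- arXiv:0705.1023 — 5 statements merged into one kernel-verified Lean document; each statement's English description precedes it below -/
import Mathlib

section
/- Let H be a Hilbert space and F, G closed subspaces with orthogonal projectors P_F, P_G. Then there exists a unitary operator W on H such that P_F P_G P_F = W* (P_G P_F P_G) W. -/
open ContinuousLinearMap
open RCLike

variable {H : Type*} [NormedAddCommGroup H] [InnerProductSpace ℂ H] [CompleteSpace H]

local notation "⟪" x ", " y "⟫" => @inner ℂ _ _ x y

/-- The orthogonal projection onto a closed subspace, as an operator on `H`. -/
noncomputable def projOf (F : Submodule ℂ H) [CompleteSpace F] : H →L[ℂ] H :=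
  F.subtypeL ∘L F.orthogonalProjection

/-- If `b` commutes with a selfadjoint `a`, it commutes with `cfc f a`. -/
lemma commute_cfc'' (a b : H →L[ℂ] H) (ha : IsSelfAdjoint a) (hab : Commute a b)
    (f : ℝ → ℝ) (hf : Continuous f) : Commute (cfc f a) b := by
  rw [cfc_apply f a ha (hf.continuousOn)]
  have key : ∀ g : C(spectrum ℝ a, ℝ), Commute (cfcHom ha g) b := by
    intro g
    induction g using ContinuousMap.induction_on_of_compact with
    | const r =>
      have : (ContinuousMap.const (spectrum ℝ a) r) = algebraMap ℝ C(spectrum ℝ a, ℝ) r := rfl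
      rw [this, AlgHomClass.commutes]
      exact Algebra.commutes r b
    | id => rwa [cfcHom_id ha]
    | star_id =>
      have : star ((ContinuousMap.id ℝ).restrict (spectrum ℝ a)) =
          ((ContinuousMap.id ℝ).restrict (spectrum ℝ a)) := by ext x; exact star_trivial _
      rwa [this, cfcHom_id ha]
    | add f g hfc hgc => rw [map_add]; exact hfc.add_left hgc
    | mul f g hfc hgc => rw [map_mul]; exact hfc.mul_left hgc
    | frequently f hfreq =>
      have hcl : IsClosed {g : C(spectrum ℝ a, ℝ) | Commute (cfcHom ha g) b} := by
        have hc : Continuous (cfcHom ha (R := ℝ)) := (cfcHom_isClosedEmbedding ha).continuous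
        exact isClosed_eq ((hc.mul continuous_const)) (continuous_const.mul hc)
      exact hcl.closure_subset (mem_closure_iff_frequently.mpr hfreq)
  exact key _


/-- Dense-range extension: an isometric correspondence `B x ↦ C x` extends to a surjective
isometry of `H`. -/
lemma exists_isometric_extension (B C : H →L[ℂ] H) (hBinj : Function.Injective B)
    (hBC_norm : ∀ x, ‖C x‖ = ‖B x‖)
    (hBdense : Dense (Set.range B)) (hCdense : Dense (Set.range C)) :
    ∃ W : H →L[ℂ] H, (∀ x, W (B x) = C x) ∧ (∀ y, ‖W y‖ = ‖y‖) ∧ Function.Surjective W := by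
  set SB : Submodule ℂ H := LinearMap.range (B : H →ₗ[ℂ] H) with hSB
  set eqv := LinearEquiv.ofInjective (B : H →ₗ[ℂ] H) hBinj with heqv
  set ℓ₀ : SB →ₗ[ℂ] H := (C : H →ₗ[ℂ] H).comp (eqv.symm : SB →ₗ[ℂ] H) with hl0
  have hl0_apply : ∀ x : H, ℓ₀ (eqv x) = C x := by
    intro x
    simp [hl0]
  have hl0_norm : ∀ s : SB, ‖ℓ₀ s‖ = ‖s‖ := by
    intro s
    obtain ⟨x, hx⟩ := s.2
    have hs : s = eqv x := by
      apply Subtype.ext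
      simp [heqv, LinearEquiv.ofInjective_apply, ← hx]
    rw [hs, hl0_apply, hBC_norm]
    simp [heqv, LinearEquiv.ofInjective_apply]
  set ℓ : SB →L[ℂ] H := LinearMap.mkContinuous ℓ₀ 1 (fun s => by rw [hl0_norm]; simp) with hl
  have hl_apply : ∀ s : SB, ℓ s = ℓ₀ s := fun s => rfl
  have hdense : DenseRange (SB.subtypeL) := by
    have h1 : Set.range (SB.subtypeL) = (SB : Set H) := Subtype.range_coe
    rw [DenseRange, h1]
    have h2 : (SB : Set H) = Set.range B := by
      ext z; simp [hSB, LinearMap.mem_range, Set.mem_range]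
    rw [h2]; exact hBdense
  have hui : IsUniformInducing (SB.subtypeL) := isometry_subtype_coe.isUniformInducing
  set W : H →L[ℂ] H := ℓ.extend SB.subtypeL with hW
  have hWe : ∀ s : SB, W s = ℓ s := by
    intro s
    have := ContinuousLinearMap.extend_eq ℓ hdense hui s
    simpa using this
  have hWB : ∀ x, W (B x) = C x := by
    intro x
    have hmem : B x ∈ SB := ⟨x, rfl⟩
    have h1 : W (B x) = W ((⟨B x, hmem⟩ : SB) : H) := rfl
    rw [h1, hWe ⟨B x, hmem⟩, hl_apply]
    have h2 : (⟨B x, hmem⟩ : SB) = eqv x := by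
      apply Subtype.ext; simp [heqv, LinearEquiv.ofInjective_apply]
    rw [h2, hl0_apply]
  have hWnorm : ∀ y, ‖W y‖ = ‖y‖ := by
    have hclosed : IsClosed {y : H | ‖W y‖ = ‖y‖} :=
      isClosed_eq (continuous_norm.comp W.continuous) continuous_norm
    intro y
    refine hdense.induction_on y hclosed ?_
    intro s
    have h1 : SB.subtypeL s = (s : H) := rfl
    rw [h1, hWe s, hl_apply, hl0_norm]
    rfl
  have hWiso : Isometry W := AddMonoidHomClass.isometry_of_norm W hWnorm
  have hWrange_closed : IsClosed (Set.range W) := hWiso.isClosedEmbedding.isClosed_range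
  have hWsurj : Function.Surjective W := by
    intro z
    have hsub : Set.range C ⊆ Set.range W := by
      rintro _ ⟨x, rfl⟩; exact ⟨B x, hWB x⟩
    have h1 : z ∈ closure (Set.range C) := hCdense z
    have h2 : z ∈ closure (Set.range W) := closure_mono hsub h1
    rwa [hWrange_closed.closure_eq] at h2
  exact ⟨W, hWB, hWnorm, hWsurj⟩

set_option maxHeartbeats 1000000 in
/-- Key abstract lemma: for selfadjoint idempotents `P`, `Q` on a Hilbert space there is a
unitary conjugating `Q*P*Q` to `P*Q*P`. -/
lemma exists_unitary_conj_of_proj (P Q : H →L[ℂ] H) (hp : P * P = P) (hq : Q * Q = Q)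
    (hps : IsSelfAdjoint P) (hqs : IsSelfAdjoint Q) :
    ∃ W : H →L[ℂ] H, W ∈ unitary (H →L[ℂ] H) ∧
      P * Q * P = star W * (Q * P * Q) * W := by
  set A : H →L[ℂ] H := P + Q - 1 with hA
  have hp' : ∀ x, P (P x) = P x := fun x => by
    simpa [mul_apply] using DFunLike.congr_fun hp x
  have hq' : ∀ x, Q (Q x) = Q x := fun x => by
    simpa [mul_apply] using DFunLike.congr_fun hq x
  have hAsa : IsSelfAdjoint A := by
    have h1 : IsSelfAdjoint (1 : H →L[ℂ] H) := .one _
    simpa [hA] using (hps.add hqs).sub h1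
  have hint : A * (P * Q * P) = (Q * P * Q) * A := by
    ext x
    simp [hA, mul_apply, sub_apply, add_apply, one_apply, map_add, map_sub, hp', hq']
  have hcommT : Commute (A * A) (P * Q * P) := by
    unfold Commute SemiconjBy
    ext x
    simp [hA, mul_apply, sub_apply, add_apply, one_apply, map_add, map_sub, hp', hq']
  have hTsa : IsSelfAdjoint (P * Q * P) := by
    simp [IsSelfAdjoint, star_mul, hps.star_eq, hqs.star_eq, mul_assoc]
  -- the kernel of `A` and its projection
  set K : Submodule ℂ H := LinearMap.ker (A : H →ₗ[ℂ] H) with hK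
  haveI : CompleteSpace K := (ContinuousLinearMap.isClosed_ker A).completeSpace_coe
  have hPKelem : ∀ k ∈ K, P k ∈ K := by
    intro k hk
    have h0 : A k = 0 := hk
    have h1 : A (P k) = Q (A k) := by
      simp [hA, sub_apply, add_apply, one_apply, map_add, map_sub, hp', hq']
    simp [hK, LinearMap.mem_ker, h1, h0]
  have hQKelem : ∀ k ∈ K, Q k ∈ K := by
    intro k hk
    have h0 : A k = 0 := hk
    have h1 : A (Q k) = P (A k) := by
      simp [hA, sub_apply, add_apply, one_apply, map_add, map_sub, hp', hq']
    simp [hK, LinearMap.mem_ker, h1, h0]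
  have hPQK : ∀ k ∈ K, P (Q k) = 0 := by
    intro k hk
    have h0 : A k = 0 := hk
    have hs : P k + Q k - k = 0 := by simpa [hA, sub_apply, add_apply, one_apply] using h0
    have h2 : P (P k + Q k - k) = 0 := by rw [hs]; simp
    simpa [map_add, map_sub, hp'] using h2
  have hQPK : ∀ k ∈ K, Q (P k) = 0 := by
    intro k hk
    have h0 : A k = 0 := hk
    have hs : P k + Q k - k = 0 := by simpa [hA, sub_apply, add_apply, one_apply] using h0
    have h2 : Q (P k + Q k - k) = 0 := by rw [hs]; simp
    simpa [map_add, map_sub, hq'] using h2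
  have hTK : ∀ k ∈ K, (P * Q * P) k = 0 := fun k hk => by
    simp [mul_apply, hPQK _ (hPKelem k hk)]
  have hSK : ∀ k ∈ K, (Q * P * Q) k = 0 := fun k hk => by
    simp [mul_apply, hQPK _ (hQKelem k hk)]
  -- the absolute value of `A`
  set A2 : H →L[ℂ] H := A * A with hA2
  have hA2sa : IsSelfAdjoint A2 := by
    simp [hA2, IsSelfAdjoint, star_mul, hAsa.star_eq]
  have hA2nonneg : (0 : H →L[ℂ] H) ≤ A2 := by
    simpa [hAsa.star_eq] using star_mul_self_nonneg A
  set absA : H →L[ℂ] H := cfc Real.sqrt A2 with habs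
  have habs_sa : IsSelfAdjoint absA := by
    rw [habs]; exact cfc_predicate _ _
  have habs_sq : absA * absA = A2 := by
    rw [habs, ← cfc_mul Real.sqrt Real.sqrt A2]
    have h : (spectrum ℝ A2).EqOn (fun x => Real.sqrt x * Real.sqrt x) id := by
      intro x hx
      exact Real.mul_self_sqrt (spectrum_nonneg_of_nonneg hA2nonneg hx)
    rw [cfc_congr h, cfc_id ℝ A2]
  have habs_comm : Commute absA (P * Q * P) :=
    commute_cfc'' A2 (P * Q * P) hA2sa hcommT Real.sqrt Real.continuous_sqrt
  have hinner : ∀ x y, ⟪A x, y⟫ = ⟪x, A y⟫ := fun x y => by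
    nth_rewrite 1 [← hAsa.adjoint_eq]; exact adjoint_inner_left A y x
  have hinner_abs : ∀ x y, ⟪absA x, y⟫ = ⟪x, absA y⟫ := fun x y => by
    nth_rewrite 1 [← habs_sa.adjoint_eq]; exact adjoint_inner_left absA y x
  have hnorm : ∀ x, ‖absA x‖ = ‖A x‖ := by
    intro x
    have h1 : ⟪absA x, absA x⟫ = ⟪A x, A x⟫ := by
      rw [hinner_abs, hinner]
      have h3 : absA (absA x) = A (A x) := by
        simpa [mul_apply, hA2] using DFunLike.congr_fun habs_sq x
      rw [h3]
    have h2 : (‖absA x‖ : ℝ) ^ 2 = ‖A x‖ ^ 2 := by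
      have := congrArg re h1
      rw [← inner_self_eq_norm_sq (𝕜 := ℂ), ← inner_self_eq_norm_sq (𝕜 := ℂ)]; exact this
    nlinarith [norm_nonneg (absA x), norm_nonneg (A x)]
  -- the projection onto the kernel
  set PK : H →L[ℂ] H := projOf K with hPK
  have hPKsa : IsSelfAdjoint PK := isSelfAdjoint_starProjection K
  have hPKk : ∀ k ∈ K, PK k = k := by
    intro k hk
    simp [hPK, projOf, Submodule.starProjection_eq_self_iff.mpr, hk,
      Submodule.orthogonalProjection_mem_subspace_eq_self (⟨k, hk⟩ : K)]
  have hPKmem : ∀ x, PK x ∈ K := fun x => (K.orthogonalProjection x).2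
  have habsK : ∀ k ∈ K, absA k = 0 := by
    intro k hk
    have h0 : ‖absA k‖ = 0 := by rw [hnorm]; simp [show A k = 0 from hk]
    simpa using h0
  have hkerabs : ∀ y, absA y = 0 → A y = 0 := by
    intro y hy
    have h0 : ‖A y‖ = 0 := by rw [← hnorm, hy]; simp
    simpa using h0
  have horthA : ∀ x, ∀ k ∈ K, ⟪A x, k⟫ = 0 := fun x k hk => by
    rw [hinner]; simp [show A k = 0 from hk]
  have horthabs : ∀ x, ∀ k ∈ K, ⟪absA x, k⟫ = 0 := fun x k hk => by
    rw [hinner_abs]; simp [habsK k hk]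
  clear_value absA
  -- operator identities with `PK`
  have hTPK : (P * Q * P) * PK = 0 := by
    ext x
    simp [mul_apply, show (P * Q * P) (PK x) = 0 from hTK _ (hPKmem x)]
  have hPKT : PK * (P * Q * P) = 0 := by
    have h0 := congrArg star hTPK
    rwa [star_mul, hPKsa.star_eq, hTsa.star_eq, star_zero] at h0
  have hSPK : (Q * P * Q) * PK = 0 := by
    ext x
    simp [mul_apply, show (Q * P * Q) (PK x) = 0 from hSK _ (hPKmem x)]
  -- the operators `B` and `C`
  set B : H →L[ℂ] H := absA + PK with hB
  set C : H →L[ℂ] H := A + PK with hC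
  have hBC_norm : ∀ x, ‖C x‖ = ‖B x‖ := by
    intro x
    have h1 : ‖A x + PK x‖ ^ 2 = ‖A x‖ ^ 2 + 2 * re ⟪A x, PK x⟫ + ‖PK x‖ ^ 2 := norm_add_sq _ _
    have h2 : ‖absA x + PK x‖ ^ 2 = ‖absA x‖ ^ 2 + 2 * re ⟪absA x, PK x⟫ + ‖PK x‖ ^ 2 :=
      norm_add_sq _ _
    have e1 : ⟪A x, PK x⟫ = 0 := horthA x _ (hPKmem x)
    have e2 : ⟪absA x, PK x⟫ = 0 := horthabs x _ (hPKmem x)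
    have h3 : ‖C x‖ ^ 2 = ‖B x‖ ^ 2 := by
      simp only [hB, hC, add_apply]
      rw [h1, h2, e1, e2, hnorm]
    nlinarith [norm_nonneg (C x), norm_nonneg (B x)]
  have horthsplit : ∀ u v : H, ⟪u, v⟫ = 0 → u + v = 0 → u = 0 ∧ v = 0 := by
    intro u v huv hsum
    have hu : ⟪u, u⟫ = 0 := by
      have h0 : ⟪u, u + v⟫ = 0 := by rw [hsum]; simp
      rwa [inner_add_right, huv, add_zero] at h0
    have hu0 : u = 0 := inner_self_eq_zero.mp hu
    exact ⟨hu0, by simpa [hu0] using hsum⟩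
  have hBker : ∀ y, B y = 0 → y = 0 := by
    intro y hy
    have hsplit := horthsplit (absA y) (PK y) (horthabs y _ (hPKmem y)) (by simpa [hB] using hy)
    have hyK : y ∈ K := by simp [hK, LinearMap.mem_ker, hkerabs y hsplit.1]
    rw [← hPKk y hyK]; exact hsplit.2
  have hCker : ∀ y, C y = 0 → y = 0 := by
    intro y hy
    have hsplit := horthsplit (A y) (PK y) (horthA y _ (hPKmem y)) (by simpa [hC] using hy)
    have hyK : y ∈ K := hsplit.1
    rw [← hPKk y hyK]; exact hsplit.2
  have hBsa : IsSelfAdjoint B := habs_sa.add hPKsa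
  have hCsa : IsSelfAdjoint C := hAsa.add hPKsa
  have hdense_of : ∀ D : H →L[ℂ] H, IsSelfAdjoint D → (∀ y, D y = 0 → y = 0) →
      Dense (Set.range D) := by
    intro D hDsa hDker
    have hDinner : ∀ x y, ⟪D x, y⟫ = ⟪x, D y⟫ := fun x y => by
      nth_rewrite 1 [← hDsa.adjoint_eq]; exact adjoint_inner_left D y x
    set SD : Submodule ℂ H := LinearMap.range (D : H →ₗ[ℂ] H) with hSD
    have horth : SDᗮ = ⊥ := by
      rw [Submodule.eq_bot_iff]
      intro y hy
      have hDy : D y = 0 := by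
        have h0 : ⟪D y, D y⟫ = 0 := by
          have := hy (D (D y)) ⟨D y, rfl⟩
          rwa [hDinner] at this
        exact inner_self_eq_zero.mp h0
      exact hDker y hDy
    have hd : Dense (SD : Set H) := Submodule.dense_iff_topologicalClosure_eq_top.mpr
      (Submodule.topologicalClosure_eq_top_iff.mpr horth)
    rwa [hSD, LinearMap.coe_range, ContinuousLinearMap.coe_coe] at hd
  have hBdense : Dense (Set.range B) := hdense_of B hBsa hBker
  have hCdense : Dense (Set.range C) := hdense_of C hCsa hCker
  have hBinj : Function.Injective B := by
    intro a b hab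
    have h0 : B (a - b) = 0 := by simp [map_sub, hab]
    have := hBker _ h0
    exact sub_eq_zero.mp this
  obtain ⟨W, hWB, hWnorm, hWsurj⟩ :=
    exists_isometric_extension B C hBinj hBC_norm hBdense hCdense
  -- unitarity
  have hadj : adjoint W ∘L W = 1 := (W.norm_map_iff_adjoint_comp_self).mp hWnorm
  have hstar : star W * W = 1 := by rw [star_eq_adjoint]; exact hadj
  have hstar' : W * star W = 1 := by
    ext x
    obtain ⟨y, rfl⟩ := hWsurj x
    have h1 : (star W) (W y) = y := by
      have := DFunLike.congr_fun hstar y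
      simpa [mul_apply] using this
    simp [mul_apply, h1]
  have hWunitary : W ∈ unitary (H →L[ℂ] H) := ⟨hstar, hstar'⟩
  -- the intertwining identity `W * T = S * W`
  have hTabs : (P * Q * P) * B = B * (P * Q * P) := by
    rw [hB, mul_add, add_mul, hTPK, hPKT, habs_comm.eq]
  have hEqOn : Set.EqOn (fun y => W ((P * Q * P) y)) (fun y => (Q * P * Q) (W y))
      (Set.range B) := by
    rintro _ ⟨x, rfl⟩
    have h1 : (P * Q * P) (B x) = B ((P * Q * P) x) := by
      simpa [mul_apply] using DFunLike.congr_fun hTabs x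
    have h2 : PK ((P * Q * P) x) = 0 := by
      simpa [mul_apply] using DFunLike.congr_fun hPKT x
    have h3 : (Q * P * Q) (PK x) = 0 := hSK _ (hPKmem x)
    have h4 : (Q * P * Q) (A x) = A ((P * Q * P) x) := by
      simpa [mul_apply] using (DFunLike.congr_fun hint x).symm
    show W ((P * Q * P) (B x)) = (Q * P * Q) (W (B x))
    rw [h1, hWB, hWB]
    have hCapp : ∀ z, C z = A z + PK z := fun z => by rw [hC]; rfl
    rw [hCapp, hCapp]
    simp only [map_add, h2, h3, h4, add_zero]
  have hWT : W * (P * Q * P) = (Q * P * Q) * W := by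
    have hfun : (fun y => W ((P * Q * P) y)) = (fun y => (Q * P * Q) (W y)) :=
      Continuous.ext_on hBdense
        (W.continuous.comp (P * Q * P).continuous)
        ((Q * P * Q).continuous.comp W.continuous) hEqOn
    ext y
    simpa [mul_apply] using congrFun hfun y
  refine ⟨W, hWunitary, ?_⟩
  have hfin : star W * (Q * P * Q) * W = P * Q * P := by
    rw [mul_assoc, ← hWT, ← mul_assoc, hstar, one_mul]
  exact hfin.symm

theorem exists_unitary_conj (F G : Submodule ℂ H) [CompleteSpace F] [CompleteSpace G] :
    ∃ W : H →L[ℂ] H, W ∈ unitary (H →L[ℂ] H) ∧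
      projOf F * projOf G * projOf F = star W * (projOf G * projOf F * projOf G) * W := by
  have hidem : ∀ (E : Submodule ℂ H) (_ : CompleteSpace E), projOf E * projOf E = projOf E := by
    intro E hE
    ext x
    show (projOf E) ((projOf E) x) = (projOf E) x
    simp only [projOf, coe_comp', Function.comp_apply, Submodule.coe_subtypeL',
      Submodule.subtype_apply, Submodule.orthogonalProjection_mem_subspace_eq_self]
  exact exists_unitary_conj_of_proj (projOf F) (projOf G) (hidem F ‹_›) (hidem G ‹_›)
    (isSelfAdjoint_starProjection F) (isSelfAdjoint_starProjection G)
end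

section
/- For orthogonal projectors P_F, P_G on a Hilbert space, the multiplicity of the eigenvalue 1 of P_G − P_F equals dim(F⊥ ∩ G), the multiplicity of −1 equals dim(F ∩ G⊥), and the multiplicity of 0 equals dim(F ∩ G) + dim(F⊥ ∩ G⊥). -/
open ContinuousLinearMap

variable {H : Type*} [NormedAddCommGroup H] [InnerProductSpace ℂ H] [CompleteSpace H]

lemma eig_one (F G : Submodule ℂ H) [CompleteSpace F] [CompleteSpace G] :
    Module.End.eigenspace ((projOf G - projOf F : H →L[ℂ] H) : H →ₗ[ℂ] H) 1 = Fᗮ ⊓ G := by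
  ext x
  rw [Module.End.mem_eigenspace_iff]
  simp only [ContinuousLinearMap.coe_coe, sub_apply, one_smul, Submodule.mem_inf]
  have hF : (projOf F) x = (F.orthogonalProjectionOnto x : H) := rfl
  have hG : (projOf G) x = (G.orthogonalProjectionOnto x : H) := rfl
  rw [hF, hG]
  constructor
  · intro h
    set pF : H := (F.orthogonalProjectionOnto x : H)
    set pG : H := (G.orthogonalProjectionOnto x : H)
    have hinF : (inner ℂ pF x : ℂ) = inner ℂ pF pF := by
      have : inner ℂ pF (x - pF) = (0 : ℂ) :=
        Submodule.inner_right_of_mem_orthogonal (F.orthogonalProjectionOnto x).2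
          (Submodule.sub_starProjection_mem_orthogonal x)
      have := this
      rw [inner_sub_right, sub_eq_zero] at this
      exact this
    have hinG : (inner ℂ pG x : ℂ) = inner ℂ pG pG := by
      have : inner ℂ pG (x - pG) = (0 : ℂ) :=
        Submodule.inner_right_of_mem_orthogonal (G.orthogonalProjectionOnto x).2
          (Submodule.sub_starProjection_mem_orthogonal x)
      rw [inner_sub_right, sub_eq_zero] at this
      exact this
    have hsum : inner ℂ pG pG - inner ℂ pF pF = (inner ℂ x x : ℂ) := by
      rw [← hinF, ← hinG, ← inner_sub_left, h]
    have hre : ‖pG‖ ^ 2 - ‖pF‖ ^ 2 = ‖x‖ ^ 2 := by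
      have h' := hsum
      rw [inner_self_eq_norm_sq_to_K, inner_self_eq_norm_sq_to_K,
        inner_self_eq_norm_sq_to_K] at h'
      exact_mod_cast h'
    have hle : ‖pG‖ ≤ ‖x‖ := by
      have h1 : ‖G.orthogonalProjectionOnto x‖ ≤ ‖G.orthogonalProjectionOnto‖ * ‖x‖ :=
        (G.orthogonalProjectionOnto).le_opNorm x
      have h2 : ‖G.orthogonalProjectionOnto‖ * ‖x‖ ≤ 1 * ‖x‖ :=
        mul_le_mul_of_nonneg_right (Submodule.orthogonalProjectionOnto_norm_le (K := G)) (norm_nonneg x)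
      calc ‖pG‖ = ‖G.orthogonalProjectionOnto x‖ := rfl
        _ ≤ 1 * ‖x‖ := h1.trans h2
        _ = ‖x‖ := one_mul _
    have hpF0 : pF = 0 := by
      have hsq : ‖pG‖ ^ 2 ≤ ‖x‖ ^ 2 := pow_le_pow_left₀ (norm_nonneg _) hle 2
      have : ‖pF‖ = 0 := by nlinarith [sq_nonneg ‖pF‖, norm_nonneg pF]
      simpa using this
    have hxF : x ∈ Fᗮ := by
      have : F.orthogonalProjectionOnto x = 0 := by
        ext; exact hpF0
      exact Submodule.orthogonalProjectionOnto_eq_zero_iff.mp this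
    have hxG : x ∈ G := by
      rw [hpF0, sub_zero] at h
      exact Submodule.starProjection_eq_self_iff.mp h
    exact ⟨hxF, hxG⟩
  · rintro ⟨hxF, hxG⟩
    rw [Submodule.orthogonalProjectionOnto_eq_zero_iff.mpr hxF, (show (G.orthogonalProjectionOnto x : H) = x from Submodule.starProjection_eq_self_iff.mpr hxG)]
    simp

lemma eig_zero (F G : Submodule ℂ H) [CompleteSpace F] [CompleteSpace G] :
    Module.End.eigenspace ((projOf G - projOf F : H →L[ℂ] H) : H →ₗ[ℂ] H) 0 =
      (F ⊓ G) ⊔ (Fᗮ ⊓ Gᗮ) := by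
  ext x
  rw [Module.End.mem_eigenspace_iff]
  simp only [ContinuousLinearMap.coe_coe, sub_apply, zero_smul, sub_eq_zero]
  have hF : (projOf F) x = (F.orthogonalProjectionOnto x : H) := rfl
  have hG : (projOf G) x = (G.orthogonalProjectionOnto x : H) := rfl
  rw [hF, hG]
  constructor
  · intro h
    set y : H := (F.orthogonalProjectionOnto x : H) with hy
    have hyF : y ∈ F := (F.orthogonalProjectionOnto x).2
    have hyG : y ∈ G := h ▸ (G.orthogonalProjectionOnto x).2
    have h1 : x - y ∈ Fᗮ := Submodule.sub_starProjection_mem_orthogonal x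
    have h2 : x - y ∈ Gᗮ := by
      have := Submodule.sub_starProjection_mem_orthogonal (K := G) x
      rwa [Submodule.starProjection_apply, h] at this
    rw [Submodule.mem_sup]
    exact ⟨y, ⟨hyF, hyG⟩, x - y, ⟨h1, h2⟩, by abel⟩
  · intro hx
    rw [Submodule.mem_sup] at hx
    obtain ⟨a, ⟨haF, haG⟩, b, ⟨hbF, hbG⟩, rfl⟩ := hx
    have hFa : (F.orthogonalProjectionOnto (a + b) : H) = a := by
      rw [map_add]
      rw [Submodule.coe_add]
      rw [Submodule.orthogonalProjectionOnto_eq_zero_iff.mpr hbF]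
      simp [Submodule.starProjection_eq_self_iff.mpr haF]
    have hGa : (G.orthogonalProjectionOnto (a + b) : H) = a := by
      rw [map_add, Submodule.coe_add, Submodule.orthogonalProjectionOnto_eq_zero_iff.mpr hbG]
      simp [Submodule.starProjection_eq_self_iff.mpr haG]
    rw [hFa, hGa]

theorem eigenspace_dims_of_diff (F G : Submodule ℂ H) [CompleteSpace F] [CompleteSpace G] :
    Module.rank ℂ
        (Module.End.eigenspace ((projOf G - projOf F : H →L[ℂ] H) : H →ₗ[ℂ] H) 1) =
      Module.rank ℂ (Fᗮ ⊓ G : Submodule ℂ H) ∧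
    Module.rank ℂ
        (Module.End.eigenspace ((projOf G - projOf F : H →L[ℂ] H) : H →ₗ[ℂ] H) (-1)) =
      Module.rank ℂ (F ⊓ Gᗮ : Submodule ℂ H) ∧
    Module.rank ℂ
        (Module.End.eigenspace ((projOf G - projOf F : H →L[ℂ] H) : H →ₗ[ℂ] H) 0) =
      Module.rank ℂ (F ⊓ G : Submodule ℂ H) + Module.rank ℂ (Fᗮ ⊓ Gᗮ : Submodule ℂ H) := by
  refine ⟨by rw [eig_one], ?_, ?_⟩
  · have hneg : Module.End.eigenspace ((projOf G - projOf F : H →L[ℂ] H) : H →ₗ[ℂ] H) (-1) =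
        Module.End.eigenspace ((projOf F - projOf G : H →L[ℂ] H) : H →ₗ[ℂ] H) 1 := by
      ext x
      rw [Module.End.mem_eigenspace_iff, Module.End.mem_eigenspace_iff]
      simp only [ContinuousLinearMap.coe_coe, sub_apply, one_smul, neg_one_smul]
      constructor
      · intro h
        have := congrArg Neg.neg h
        simpa [neg_sub] using this
      · intro h
        have := congrArg Neg.neg h
        simpa [neg_sub] using this
    rw [hneg, eig_one, inf_comm]
  · rw [eig_zero]
    have hdisj : Disjoint (F ⊓ G) (Fᗮ ⊓ Gᗮ) :=
      (Submodule.orthogonal_disjoint F).mono inf_le_left inf_le_left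
    have := Submodule.rank_sup_add_rank_inf_eq (F ⊓ G) (Fᗮ ⊓ Gᗮ)
    rw [hdisj.eq_bot] at this
    simpa using this
end

section
/- Let U ⊆ F be a closed subspace invariant under P_F P_G, and let V = closure(P_G U) ⊕ V₀ where V₀ is a closed subspace of G ∩ F⊥. Then P_F V ⊆ U and P_G U ⊆ V. -/
open ContinuousLinearMap

variable {H : Type*} [NormedAddCommGroup H] [InnerProductSpace ℂ H] [CompleteSpace H]

theorem principal_invariant_subspaces_converse (F G U V₀ : Submodule ℂ H)
    [CompleteSpace F] [CompleteSpace G]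
    (hUF : U ≤ F) (hU : IsClosed (U : Set H))
    (hinv : ∀ u ∈ U, projOf F (projOf G u) ∈ U)
    (hV₀ : V₀ ≤ G ⊓ Fᗮ) (hV₀c : IsClosed (V₀ : Set H)) :
    (∀ v ∈ (U.map ((projOf G : H →L[ℂ] H) : H →ₗ[ℂ] H)).topologicalClosure ⊔ V₀,
        projOf F v ∈ U) ∧
      (∀ u ∈ U,
        projOf G u ∈
          (U.map ((projOf G : H →L[ℂ] H) : H →ₗ[ℂ] H)).topologicalClosure ⊔ V₀) := by
  set W := (U.map ((projOf G : H →L[ℂ] H) : H →ₗ[ℂ] H)).topologicalClosure with hW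
  have hclos : ∀ v ∈ W, projOf F v ∈ U := by
    intro v hv
    have hsub : (W : Set H) ⊆ (projOf F) ⁻¹' (U : Set H) := by
      have hcl : IsClosed ((projOf F) ⁻¹' (U : Set H)) := hU.preimage (projOf F).continuous
      have : (U.map ((projOf G : H →L[ℂ] H) : H →ₗ[ℂ] H) : Set H) ⊆
          (projOf F) ⁻¹' (U : Set H) := by
        rintro _ ⟨u, hu, rfl⟩
        exact hinv u hu
      calc (W : Set H) ⊆ closure (U.map ((projOf G : H →L[ℂ] H) : H →ₗ[ℂ] H) : Set H) := by
            simp [hW, Submodule.topologicalClosure_coe]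
        _ ⊆ (projOf F) ⁻¹' (U : Set H) := hcl.closure_subset_iff.mpr this
    exact hsub hv
  constructor
  · intro v hv
    obtain ⟨x, hx, y, hy, rfl⟩ := Submodule.mem_sup.mp hv
    have hy' : projOf F y = 0 := by
      have : y ∈ Fᗮ := (hV₀ hy).2
      simp [projOf, Submodule.orthogonalProjectionOnto_apply_of_mem_orthogonal this]
    rw [map_add, hy', add_zero]
    exact hclos x hx
  · intro u hu
    refine Submodule.mem_sup_left ?_
    exact Submodule.le_topologicalClosure _ ⟨u, hu, rfl⟩
end

section
/- Let A be a bounded selfadjoint operator on a Hilbert space H and f, g nonzero vectors. Then |λ(f) − λ(g)| ≤ (sup Σ(A) − inf Σ(A)) · sin θ(f,g), where λ(h) = (h, Ah)/(h,h) is the Rayleigh quotient and cos θ(f,g) = |(f,g)|/(‖f‖‖g‖). -/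
open ContinuousLinearMap


lemma norm_shift_le {H : Type*} [NormedAddCommGroup H] [InnerProductSpace ℂ H]
    [CompleteSpace H] [Nontrivial H] (A : H →L[ℂ] H) (hA : IsSelfAdjoint A) :
    ‖A - algebraMap ℂ (H →L[ℂ] H) (((sInf (spectrum ℝ A) + sSup (spectrum ℝ A)) / 2 : ℝ) : ℂ)‖ ≤
      (sSup (spectrum ℝ A) - sInf (spectrum ℝ A)) / 2 := by
  set m := sInf (spectrum ℝ A)
  set M := sSup (spectrum ℝ A)
  have hspecR : spectrum ℝ A = Complex.ofReal ⁻¹' spectrum ℂ A := by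
    rw [← spectrum.preimage_algebraMap ℂ]; rfl
  have hne : (spectrum ℝ A).Nonempty := by
    obtain ⟨z, hz⟩ := spectrum.nonempty A
    refine ⟨z.re, ?_⟩
    rw [hspecR]
    simpa [← hA.mem_spectrum_eq_re hz] using hz
  have hbdd : Bornology.IsBounded (spectrum ℝ A) := spectrum.isBounded A
  have hub : ∀ x ∈ spectrum ℝ A, m ≤ x ∧ x ≤ M := fun x hx =>
    ⟨csInf_le hbdd.bddBelow hx, le_csSup hbdd.bddAbove hx⟩
  have hmM : m ≤ M := by
    obtain ⟨x, hx⟩ := hne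
    exact le_trans (hub x hx).1 (hub x hx).2
  set c : ℝ := (m + M) / 2
  set B := A - algebraMap ℂ (H →L[ℂ] H) (c : ℂ) with hBdef
  have hBsa : IsSelfAdjoint B := by
    refine hA.sub ?_
    rw [IsSelfAdjoint, ← algebraMap_star_comm, RCLike.star_def, Complex.conj_ofReal]
  have hrad : spectralRadius ℂ B ≤ ENNReal.ofReal ((M - m) / 2) := by
    rw [spectralRadius]
    refine iSup₂_le fun z hz => ?_
    rw [hBdef, ← spectrum.sub_singleton_eq] at hz
    obtain ⟨x, hx, y, hy, rfl⟩ := hz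
    rw [Set.mem_singleton_iff] at hy
    subst hy
    have hxre : x = (x.re : ℂ) := hA.mem_spectrum_eq_re hx
    have hxmem : x.re ∈ spectrum ℝ A := by rw [hspecR]; simpa [← hxre] using hx
    obtain ⟨h1, h2⟩ := hub _ hxmem
    rw [← enorm_eq_nnnorm, ← ofReal_norm]
    refine ENNReal.ofReal_le_ofReal ?_
    show ‖x - (c:ℂ)‖ ≤ (M - m) / 2
    rw [hxre, ← Complex.ofReal_sub, Complex.norm_real]
    rw [Real.norm_eq_abs, abs_le]
    constructor <;> simp only [c] <;> linarith
  have heq : ‖B‖ = (spectralRadius ℂ B).toReal := hBsa.toReal_spectralRadius_complex_eq_norm.symm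
  rw [heq]
  calc (spectralRadius ℂ B).toReal ≤ (ENNReal.ofReal ((M - m) / 2)).toReal :=
        ENNReal.toReal_mono ENNReal.ofReal_ne_top hrad
    _ ≤ (M - m) / 2 := le_of_eq (ENNReal.toReal_ofReal (by linarith))

lemma aux_unit {H : Type*} [NormedAddCommGroup H] [InnerProductSpace ℂ H]
    [CompleteSpace H] (A : H →L[ℂ] H) (hA : IsSelfAdjoint A) (f g : H)
    (hf : ‖f‖ = 1) (hg : ‖g‖ = 1)
    (hfg : (inner ℂ f g : ℂ) = ((‖(inner ℂ f g : ℂ)‖ : ℝ) : ℂ)) :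
    |(inner ℂ f (A f) : ℂ).re - (inner ℂ g (A g) : ℂ).re| ≤
      (sSup (spectrum ℝ A) - sInf (spectrum ℝ A)) *
        Real.sqrt (1 - ‖(inner ℂ f g : ℂ)‖ ^ 2) := by
  have : Nontrivial H := nontrivial_of_ne f 0 (by intro h; rw [h] at hf; simp at hf)
  set m := sInf (spectrum ℝ A)
  set M := sSup (spectrum ℝ A)
  set c : ℝ := (m + M) / 2 with hc
  set B := A - algebraMap ℂ (H →L[ℂ] H) (c : ℂ) with hBdef
  have hBsa : IsSelfAdjoint B := by
    refine hA.sub ?_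
    rw [IsSelfAdjoint, ← algebraMap_star_comm, RCLike.star_def, Complex.conj_ofReal]
  have hBnorm : ‖B‖ ≤ (M - m) / 2 := norm_shift_le A hA
  set t : ℝ := ‖(inner ℂ f g : ℂ)‖ with ht
  have ht0 : 0 ≤ t := norm_nonneg _
  have ht1 : t ≤ 1 := by
    have := norm_inner_le_norm (𝕜 := ℂ) f g
    calc t ≤ ‖f‖ * ‖g‖ := this
      _ = 1 := by rw [hf, hg]; ring
  -- apply of B
  have hBapp : ∀ x : H, B x = A x - (c : ℂ) • x := by
    intro x
    rw [hBdef]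
    simp [Algebra.algebraMap_eq_smul_one]
  -- symmetric cross terms
  have hcross : (inner ℂ g (B f) : ℂ).re = (inner ℂ f (B g) : ℂ).re := by
    have h1 : (inner ℂ g (B f) : ℂ) = inner ℂ (B g) f := by
      rw [← ContinuousLinearMap.adjoint_inner_left]
      congr 1
      rw [← ContinuousLinearMap.star_eq_adjoint, hBsa]
    have h2 : (inner ℂ (B g) f : ℂ) = starRingEnd ℂ (inner ℂ f (B g)) := (inner_conj_symm _ _).symm
    rw [h1, h2, Complex.conj_re]
  -- inner ℂ self = 1
  have hff : (inner ℂ f f : ℂ) = 1 := by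
    rw [inner_self_eq_norm_sq_to_K, hf]; norm_num
  have hgg : (inner ℂ g g : ℂ) = 1 := by
    rw [inner_self_eq_norm_sq_to_K, hg]; norm_num
  -- the key identity
  have hid : (inner ℂ f (A f) : ℂ).re - (inner ℂ g (A g) : ℂ).re
      = (inner ℂ (f - g) (B (f + g)) : ℂ).re := by
    have e1 : (inner ℂ (f - g) (B (f + g)) : ℂ)
        = inner ℂ f (B f) + inner ℂ f (B g) - inner ℂ g (B f) - inner ℂ g (B g) := by
      rw [map_add, inner_sub_left]
      simp only [inner_add_right]
      ring
    have e2 : (inner ℂ f (B f) : ℂ).re = (inner ℂ f (A f) : ℂ).re - c := by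
      rw [hBapp, inner_sub_right, inner_smul_right, hff, mul_one]
      simp
    have e3 : (inner ℂ g (B g) : ℂ).re = (inner ℂ g (A g) : ℂ).re - c := by
      rw [hBapp, inner_sub_right, inner_smul_right, hgg, mul_one]
      simp
    rw [e1]
    simp only [Complex.sub_re, Complex.add_re, e2, e3, hcross]
    ring
  -- norms of f ± g
  have hre : (inner ℂ f g : ℂ).re = t := by rw [hfg]; simp
  have en1 : ‖f - g‖ = Real.sqrt (2 - 2 * t) := by
    rw [← Real.sqrt_sq (norm_nonneg (f - g))]
    congr 1
    rw [@norm_sub_sq ℂ, hf, hg]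
    simp only [RCLike.re_to_complex, hre]
    ring
  have en2 : ‖f + g‖ = Real.sqrt (2 + 2 * t) := by
    rw [← Real.sqrt_sq (norm_nonneg (f + g))]
    congr 1
    rw [@norm_add_sq ℂ, hf, hg]
    simp only [RCLike.re_to_complex, hre]
    ring
  have eprod : ‖f - g‖ * ‖f + g‖ = 2 * Real.sqrt (1 - t ^ 2) := by
    rw [en1, en2, ← Real.sqrt_mul (by linarith)]
    rw [show (2 - 2*t) * (2 + 2*t) = 4 * (1 - t^2) by ring]
    rw [Real.sqrt_mul (by norm_num)]
    rw [show (4:ℝ) = 2^2 by norm_num, Real.sqrt_sq (by norm_num : (0:ℝ) ≤ 2)]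
  have hsqrt0 : 0 ≤ Real.sqrt (1 - t ^ 2) := Real.sqrt_nonneg _
  have hB0 : 0 ≤ ‖B‖ := norm_nonneg _
  have hmain : |(inner ℂ (f - g) (B (f + g)) : ℂ).re| ≤ ‖B‖ * (‖f - g‖ * ‖f + g‖) := by
    calc |(inner ℂ (f - g) (B (f + g)) : ℂ).re| ≤ ‖(inner ℂ (f - g) (B (f + g)) : ℂ)‖ :=
          Complex.abs_re_le_norm _
      _ ≤ ‖f - g‖ * ‖B (f + g)‖ := norm_inner_le_norm _ _
      _ ≤ ‖f - g‖ * (‖B‖ * ‖f + g‖) := by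
          exact mul_le_mul_of_nonneg_left (B.le_opNorm _) (norm_nonneg _)
      _ = ‖B‖ * (‖f - g‖ * ‖f + g‖) := by ring
  rw [hid]
  calc |(inner ℂ (f - g) (B (f + g)) : ℂ).re| ≤ ‖B‖ * (‖f - g‖ * ‖f + g‖) := hmain
    _ = ‖B‖ * (2 * Real.sqrt (1 - t ^ 2)) := by rw [eprod]
    _ ≤ ((M - m) / 2) * (2 * Real.sqrt (1 - t ^ 2)) := by
        exact mul_le_mul_of_nonneg_right hBnorm (by positivity)
    _ = (M - m) * Real.sqrt (1 - t ^ 2) := by ring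

theorem rayleigh_quotient_perturbation {H : Type*} [NormedAddCommGroup H]
    [InnerProductSpace ℂ H] [CompleteSpace H]
    (A : H →L[ℂ] H) (hA : IsSelfAdjoint A) (f g : H) (hf : f ≠ 0) (hg : g ≠ 0) :
    |(inner ℂ f (A f) : ℂ).re / ‖f‖ ^ 2 - (inner ℂ g (A g) : ℂ).re / ‖g‖ ^ 2| ≤
      (sSup (spectrum ℝ A) - sInf (spectrum ℝ A)) *
        Real.sqrt (1 - ‖(inner ℂ f g : ℂ)‖ ^ 2 / (‖f‖ ^ 2 * ‖g‖ ^ 2)) := by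
  have hfn : ‖f‖ ≠ 0 := norm_ne_zero_iff.mpr hf
  have hgn : ‖g‖ ≠ 0 := norm_ne_zero_iff.mpr hg
  set z : ℂ := inner ℂ f g with hz
  set c : ℂ := if z = 0 then 1 else (‖z‖ : ℂ) / z with hcdef
  have hcnorm : ‖c‖ = 1 := by
    rw [hcdef]
    split_ifs with h
    · simp
    · rw [norm_div, Complex.norm_real, norm_norm, div_self (norm_ne_zero_iff.mpr h)]
  have hcz : c * z = (‖z‖ : ℂ) := by
    rw [hcdef]
    split_ifs with h
    · simp [h]
    · field_simp
  set F : H := ((‖f‖⁻¹ : ℝ) : ℂ) • f with hF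
  set G : H := (c * ((‖g‖⁻¹ : ℝ) : ℂ)) • g with hG
  have hFn : ‖F‖ = 1 := by
    rw [hF, norm_smul, Complex.norm_real, norm_inv, norm_norm, inv_mul_cancel₀ hfn]
  have hGn : ‖G‖ = 1 := by
    rw [hG, norm_smul, norm_mul, hcnorm, Complex.norm_real, norm_inv, norm_norm]
    rw [one_mul, inv_mul_cancel₀ hgn]
  have hFG : (inner ℂ F G : ℂ) = (((‖f‖⁻¹ * ‖g‖⁻¹ * ‖z‖ : ℝ)) : ℂ) := by
    rw [hF, hG, inner_smul_left, inner_smul_right, Complex.conj_ofReal, ← hz]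
    push_cast
    rw [← hcz]
    ring
  have hFGnorm : ‖(inner ℂ F G : ℂ)‖ = ‖f‖⁻¹ * ‖g‖⁻¹ * ‖z‖ := by
    rw [hFG, Complex.norm_real, Real.norm_eq_abs, abs_of_nonneg (by positivity)]
  have hFGcond : (inner ℂ F G : ℂ) = ((‖(inner ℂ F G : ℂ)‖ : ℝ) : ℂ) := by
    rw [hFGnorm, hFG]
  have key := aux_unit A hA F G hFn hGn hFGcond
  -- rewrite Rayleigh quotients
  have hAF : (inner ℂ F (A F) : ℂ).re = (inner ℂ f (A f) : ℂ).re / ‖f‖ ^ 2 := by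
    rw [hF, map_smul, inner_smul_left, inner_smul_right, Complex.conj_ofReal]
    rw [← mul_assoc, ← Complex.ofReal_mul]
    rw [Complex.re_ofReal_mul, div_eq_mul_inv, pow_two, mul_inv]
    ring
  have hAG : (inner ℂ G (A G) : ℂ).re = (inner ℂ g (A g) : ℂ).re / ‖g‖ ^ 2 := by
    rw [hG, map_smul, inner_smul_left, inner_smul_right]
    have : (starRingEnd ℂ) (c * ((‖g‖⁻¹ : ℝ) : ℂ)) * (c * ((‖g‖⁻¹ : ℝ) : ℂ) * inner ℂ g (A g))
        = ((‖g‖⁻¹ ^ 2 : ℝ) : ℂ) * inner ℂ g (A g) := by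
      rw [map_mul, Complex.conj_ofReal]
      have hcc : (starRingEnd ℂ) c * c = 1 := by
        rw [mul_comm, Complex.mul_conj, Complex.normSq_eq_norm_sq, hcnorm]
        norm_num
      calc (starRingEnd ℂ) c * ((‖g‖⁻¹:ℝ):ℂ) * (c * ((‖g‖⁻¹:ℝ):ℂ) * inner ℂ g (A g))
          = ((starRingEnd ℂ) c * c) * (((‖g‖⁻¹:ℝ):ℂ) * ((‖g‖⁻¹:ℝ):ℂ) * inner ℂ g (A g)) := by ring
        _ = ((‖g‖⁻¹:ℝ):ℂ) ^ 2 * inner ℂ g (A g) := by rw [hcc]; ring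
        _ = ((‖g‖⁻¹ ^ 2 : ℝ) : ℂ) * inner ℂ g (A g) := by push_cast; ring
    rw [this, Complex.re_ofReal_mul, div_eq_mul_inv, inv_pow]
    ring
  have hFGsq : ‖(inner ℂ F G : ℂ)‖ ^ 2 = ‖z‖ ^ 2 / (‖f‖ ^ 2 * ‖g‖ ^ 2) := by
    rw [hFGnorm, div_eq_mul_inv, mul_inv, ← inv_pow, ← inv_pow, mul_pow, mul_pow]
    ring
  rw [hAF, hAG, hFGsq] at key
  exact key
end

section
/- Let h, f, g be unit vectors in a Hilbert space. Then |cos² θ(h,f) − cos² θ(h,g)| ≤ sin θ(f,g), where cos θ(x,y) = |(x,y)| and sin θ(f,g) = sqrt(1 − |(f,g)|²). -/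
open scoped InnerProductSpace

private lemma key_real (s c β τ α : ℝ) (hs : 0 ≤ s) (hcs : c^2 + s^2 = 1)
    (hτ : 0 ≤ τ) (hτ2 : τ^2 ≤ (1-β^2)*s^2)
    (hα : 0 ≤ α) (hαle : α ≤ c*β + τ) : α^2 - β^2 ≤ s := by
  have h1 : α^2 ≤ (c*β + τ)^2 := by nlinarith
  rcases eq_or_lt_of_le hs with h0 | hspos
  · have hτ0 : τ = 0 := by nlinarith
    nlinarith
  · set u := τ / s with hu
    have hτu : τ = s * u := by rw [hu, mul_div_assoc', mul_comm, mul_div_assoc, div_self hspos.ne', mul_one]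
    have hu2 : u^2 ≤ 1 - β^2 := by
      rw [hτu] at hτ2
      have := mul_pos hspos hspos
      nlinarith
    have hq : -s*β^2 + 2*c*β*u + s*u^2 ≤ β^2 + u^2 := by
      have hsq := sq_nonneg ((1+s)*β - c*u)
      have h1s : 0 < 1 + s := by linarith
      nlinarith
    have key : (c*β + τ)^2 - β^2 ≤ s := by
      rw [hτu]
      nlinarith [mul_le_mul_of_nonneg_left hq hs]
    linarith

private lemma one_side {H : Type*} [NormedAddCommGroup H]
    [InnerProductSpace ℂ H] (h f g : H)
    (hh : ‖h‖ = 1) (hf : ‖f‖ = 1) (hg : ‖g‖ = 1) :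
    ‖(inner ℂ h f : ℂ)‖ ^ 2 - ‖(inner ℂ h g : ℂ)‖ ^ 2 ≤
      Real.sqrt (1 - ‖(inner ℂ f g : ℂ)‖ ^ 2) := by
  set c : ℂ := inner ℂ g f with hc
  set b : ℂ := inner ℂ h g with hb
  set a : ℂ := inner ℂ h f with ha
  set r : H := f - c • g with hr
  set u : H := h - (inner ℂ g h : ℂ) • g with hu
  have hgg : (inner ℂ g g : ℂ) = 1 := by
    rw [inner_self_eq_norm_sq_to_K, hg]; norm_num
  have hc1 : ‖c‖ ≤ 1 := by
    calc ‖c‖ ≤ ‖g‖ * ‖f‖ := norm_inner_le_norm g f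
    _ = 1 := by rw [hf, hg]; ring
  have hb1 : ‖b‖ ≤ 1 := by
    calc ‖b‖ ≤ ‖h‖ * ‖g‖ := norm_inner_le_norm h g
    _ = 1 := by rw [hh, hg]; ring
  -- norm of r
  have hrsq : ‖r‖^2 = 1 - ‖c‖^2 := by
    have := @norm_sub_sq ℂ H _ _ _ f (c • g)
    rw [inner_smul_right] at this
    have hfg : (inner ℂ f g : ℂ) = starRingEnd ℂ c := by rw [hc, ← inner_conj_symm]
    rw [hfg] at this
    simp only [Complex.mul_conj', Complex.conj_mul'] at this
    rw [hr, this, norm_smul, hf, hg, ← Complex.ofReal_pow]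
    simp
    rw [← Complex.ofReal_pow, Complex.ofReal_re]
    ring
  have husq : ‖u‖^2 = 1 - ‖b‖^2 := by
    have := @norm_sub_sq ℂ H _ _ _ h ((inner ℂ g h : ℂ) • g)
    rw [inner_smul_right] at this
    have hhg : (inner ℂ h g : ℂ) = starRingEnd ℂ (inner ℂ g h : ℂ) := by
      rw [← inner_conj_symm]
    rw [hhg] at this
    simp only [Complex.mul_conj', Complex.conj_mul'] at this
    rw [hu, this, norm_smul, hh, hg, ← Complex.ofReal_pow]
    have hbgh : ‖(inner ℂ g h : ℂ)‖ = ‖b‖ := by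
      rw [hb, ← inner_conj_symm g h, RCLike.norm_conj]
    simp [hbgh]
    rw [← Complex.ofReal_pow, Complex.ofReal_re]
    ring
  -- inner ℂ g r = 0
  have hgr : (inner ℂ g r : ℂ) = 0 := by
    rw [hr, inner_sub_right, inner_smul_right, hgg, ← hc]
    ring
  -- t := inner ℂ h r ; a = c * b + t
  set t : ℂ := inner ℂ h r with ht
  have hat : a = c * b + t := by
    rw [ht, hr, inner_sub_right, inner_smul_right, ← ha, ← hb]
    ring
  -- inner ℂ u r = t
  have hur : (inner ℂ u r : ℂ) = t := by
    rw [hu, inner_sub_left, inner_smul_left, hgr, ht]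
    ring
  -- Cauchy-Schwarz for t
  have htle : ‖t‖ ≤ ‖u‖ * ‖r‖ := by
    rw [← hur]; exact norm_inner_le_norm u r
  have hrnn : (0:ℝ) ≤ 1 - ‖c‖^2 := by nlinarith [norm_nonneg c]
  have hbnn : (0:ℝ) ≤ 1 - ‖b‖^2 := by nlinarith [norm_nonneg b]
  have hrn : ‖r‖ = Real.sqrt (1 - ‖c‖^2) := by
    rw [← hrsq]; exact (Real.sqrt_sq (norm_nonneg r)).symm
  have hun : ‖u‖ = Real.sqrt (1 - ‖b‖^2) := by
    rw [← husq]; exact (Real.sqrt_sq (norm_nonneg u)).symm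
  have hτ2 : ‖t‖^2 ≤ (1 - ‖b‖^2) * (1 - ‖c‖^2) := by
    have h2 : ‖t‖^2 ≤ (‖u‖ * ‖r‖)^2 := by
      apply sq_le_sq' <;> nlinarith [norm_nonneg t, mul_nonneg (norm_nonneg u) (norm_nonneg r)]
    calc ‖t‖^2 ≤ (‖u‖ * ‖r‖)^2 := h2
    _ = ‖u‖^2 * ‖r‖^2 := by ring
    _ = (1 - ‖b‖^2) * (1 - ‖c‖^2) := by rw [husq, hrsq]
  -- rewrite goal sqrt arg
  have hfg_c : ‖(inner ℂ f g : ℂ)‖ = ‖c‖ := by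
    rw [hc, ← inner_conj_symm f g, RCLike.norm_conj]
  rw [hfg_c]
  -- apply key_real
  have hs : (0:ℝ) ≤ Real.sqrt (1 - ‖c‖^2) := Real.sqrt_nonneg _
  have hcs : ‖c‖^2 + (Real.sqrt (1 - ‖c‖^2))^2 = 1 := by
    rw [Real.sq_sqrt hrnn]; ring
  have hαle : ‖a‖ ≤ ‖c‖ * ‖b‖ + ‖t‖ := by
    calc ‖a‖ = ‖c * b + t‖ := by rw [hat]
    _ ≤ ‖c * b‖ + ‖t‖ := norm_add_le _ _
    _ = ‖c‖ * ‖b‖ + ‖t‖ := by rw [norm_mul]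
  have hτ2' : ‖t‖^2 ≤ (1 - ‖b‖^2) * (Real.sqrt (1 - ‖c‖^2))^2 := by
    rw [Real.sq_sqrt hrnn]; exact hτ2
  exact key_real (Real.sqrt (1 - ‖c‖^2)) ‖c‖ ‖b‖ ‖t‖ ‖a‖ hs hcs
    (norm_nonneg t) hτ2' (norm_nonneg a) hαle

theorem cos_sq_angle_perturbation {H : Type*} [NormedAddCommGroup H]
    [InnerProductSpace ℂ H] (h f g : H)
    (hh : ‖h‖ = 1) (hf : ‖f‖ = 1) (hg : ‖g‖ = 1) :
    |‖(inner ℂ h f : ℂ)‖ ^ 2 - ‖(inner ℂ h g : ℂ)‖ ^ 2| ≤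
      Real.sqrt (1 - ‖(inner ℂ f g : ℂ)‖ ^ 2) := by
  rw [abs_sub_le_iff]
  constructor
  · exact one_side h f g hh hf hg
  · have hsym : ‖(inner ℂ g f : ℂ)‖ = ‖(inner ℂ f g : ℂ)‖ := by
      rw [← inner_conj_symm g f, RCLike.norm_conj]
    have := one_side h g f hh hg hf
    rwa [hsym] at this
end
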